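/- Let μ = N(m_1, Σ_1) and ν = N(m_2, Σ_2) be Gaussian measures on ℝ^d with positive definite covariances, and let 0 ≤ ε < α* = 1/2 (the maximal halfspace depth of a continuous distribution is attained at value 1/2 for Gaussians). Then |DR_{1,ε}(μ,ν) − ‖m_1 − m_2‖| ≤ C_ε · sup_{u ∈ S^{d−1}} |√(uᵀΣ_1u) − √(uᵀΣ_2u)|, where C_ε = (1/(1/2 − ε)) ∫_ε^{1/2} |Φ^{-1}(1−α)| dα and Φ is the cdf of the standard univariate Gaussian distribution. -/

import Mathlib

open MeasureTheory ProbabilityTheory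
open scoped RealInnerProductSpace

/-- The halfspace (Tukey) depth of `x` w.r.t. a measure `ρ` on `ℝ^d`. -/
noncomputable def halfspaceDepth (d : ℕ) (ρ : Measure (EuclideanSpace ℝ (Fin d)))
    (x : EuclideanSpace ℝ (Fin d)) : ℝ :=
  ⨅ u : Metric.sphere (0 : EuclideanSpace ℝ (Fin d)) 1,
    (ρ {y | ⟪(u : EuclideanSpace ℝ (Fin d)), y⟫ ≤ ⟪(u : EuclideanSpace ℝ (Fin d)), x⟫}).toReal

/-- The `α`-depth region of the halfspace depth. -/
def hdRegion (d : ℕ) (ρ : Measure (EuclideanSpace ℝ (Fin d))) (α : ℝ) :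
    Set (EuclideanSpace ℝ (Fin d)) :=
  {x | α ≤ halfspaceDepth d ρ x}

/-- The quadratic form `u ↦ uᵀ Σ u` of a matrix `Σ` on `ℝ^d`. -/
def quadForm (d : ℕ) (S : Matrix (Fin d) (Fin d) ℝ) (u : EuclideanSpace ℝ (Fin d)) : ℝ :=
  dotProduct (fun i => u i) (S.mulVec (fun i => u i))

/-- `Φ`, the cdf of the standard univariate Gaussian distribution. -/
noncomputable def stdGaussianCDF (t : ℝ) : ℝ :=
  ((gaussianReal 0 1) (Set.Iic t)).toReal

/-- The generalized inverse `Φ⁻¹` of the standard Gaussian cdf. -/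
noncomputable def stdGaussianQuantile (q : ℝ) : ℝ :=
  sInf {t : ℝ | q ≤ stdGaussianCDF t}

/-- The depth-region discrepancy `DR_{1,ε}` (with `α* = 1/2`) computed with the
halfspace depth. -/
noncomputable def DR1eps (d : ℕ) (ε : ℝ)
    (μ ν : Measure (EuclideanSpace ℝ (Fin d))) : ℝ :=
  (1 / 2 - ε)⁻¹ * ∫ α in ε..(1 / 2),
    Metric.hausdorffDist (hdRegion d μ α) (hdRegion d ν α)

open MeasureTheory ProbabilityTheory Set Real Matrix
open scoped RealInnerProductSpace



lemma sgPDF_nonneg (x : ℝ) : 0 ≤ gaussianPDFReal 0 1 x := gaussianPDFReal_nonneg 0 1 x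

lemma sgCDF_eq (t : ℝ) : stdGaussianCDF t = ∫ x in Set.Iic t, gaussianPDFReal 0 1 x := by
  rw [stdGaussianCDF, gaussianReal_apply_eq_integral _ one_ne_zero, ENNReal.toReal_ofReal]
  exact setIntegral_nonneg measurableSet_Iic fun x _ => sgPDF_nonneg x

lemma sgInt (s : Set ℝ) : IntegrableOn (gaussianPDFReal 0 1) s :=
  (integrable_gaussianPDFReal 0 1).integrableOn

lemma sgCDF_sub {s t : ℝ} (h : s ≤ t) :
    stdGaussianCDF t - stdGaussianCDF s = ∫ x in Set.Ioc s t, gaussianPDFReal 0 1 x := by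
  rw [sgCDF_eq, sgCDF_eq, ← Set.Iic_union_Ioc_eq_Iic h,
    setIntegral_union (Set.Iic_disjoint_Ioc le_rfl) measurableSet_Ioc (sgInt _) (sgInt _)]
  ring

lemma sgCDF_strictMono : StrictMono stdGaussianCDF := by
  intro s t hst
  have h : 0 < ∫ x in Set.Ioc s t, gaussianPDFReal 0 1 x := by
    rw [setIntegral_pos_iff_support_of_nonneg_ae
      (ae_of_all _ fun x => sgPDF_nonneg x) (sgInt _)]
    have : Function.support (gaussianPDFReal 0 1) = Set.univ := by
      ext x; simp [Function.mem_support, (gaussianPDFReal_pos 0 1 x one_ne_zero).ne']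
    rw [this, Set.univ_inter, Real.volume_Ioc]
    simp [hst]
  have := sgCDF_sub hst.le
  linarith

lemma sgPDF_le_one (x : ℝ) : gaussianPDFReal 0 1 x ≤ 1 := by
  rw [gaussianPDFReal]
  have h1 : (1 : ℝ) ≤ Real.sqrt (2 * π * (1 : NNReal)) := by
    rw [show ((1 : NNReal) : ℝ) = 1 by norm_num, mul_one]
    rw [show (1:ℝ) = Real.sqrt 1 by simp]
    apply Real.sqrt_le_sqrt
    nlinarith [Real.pi_gt_three]
  have h2 : Real.exp (-(x - 0) ^ 2 / (2 * (1 : NNReal))) ≤ 1 := by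
    rw [Real.exp_le_one_iff]
    have : (0:ℝ) < 2 * (1 : NNReal) := by norm_num
    apply div_nonpos_of_nonpos_of_nonneg <;> nlinarith [sq_nonneg (x - 0)]
  calc (Real.sqrt (2 * π * (1 : NNReal)))⁻¹ * Real.exp (-(x - 0) ^ 2 / (2 * (1 : NNReal)))
      ≤ 1 * 1 := by
        apply mul_le_mul _ h2 (Real.exp_pos _).le zero_le_one
        rw [inv_le_one_iff₀]; right; exact h1
    _ = 1 := by norm_num

lemma sgCDF_lipschitz (s t : ℝ) : |stdGaussianCDF t - stdGaussianCDF s| ≤ |t - s| := by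
  wlog h : s ≤ t generalizing s t
  · rw [abs_sub_comm, abs_sub_comm t s]; exact this t s (le_of_not_ge h)
  rw [sgCDF_sub h]
  have h1 : ∫ x in Set.Ioc s t, gaussianPDFReal 0 1 x ≤ ∫ _x in Set.Ioc s t, (1:ℝ) := by
    apply setIntegral_mono_on (sgInt _) (integrableOn_const ?_) measurableSet_Ioc
      fun x _ => sgPDF_le_one x
    rw [Real.volume_Ioc]; exact ENNReal.ofReal_ne_top
  have h2 : ∫ _x in Set.Ioc s t, (1:ℝ) = t - s := by
    simp [Real.volume_Ioc, ENNReal.toReal_ofReal (sub_nonneg.2 h), h]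
  have h3 : 0 ≤ ∫ x in Set.Ioc s t, gaussianPDFReal 0 1 x :=
    setIntegral_nonneg measurableSet_Ioc fun x _ => sgPDF_nonneg x
  rw [abs_of_nonneg h3, abs_of_nonneg (sub_nonneg.2 h)]
  linarith

lemma sgCDF_continuous : Continuous stdGaussianCDF := by
  refine (LipschitzWith.of_dist_le_mul (K := 1) fun s t => ?_).continuous
  rw [Real.dist_eq, Real.dist_eq, NNReal.coe_one, one_mul]
  exact sgCDF_lipschitz t s

lemma sgPDF_even (x : ℝ) : gaussianPDFReal 0 1 (-x) = gaussianPDFReal 0 1 x := by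
  rw [gaussianPDFReal, gaussianPDFReal]; ring_nf

lemma sgCDF_neg (t : ℝ) : stdGaussianCDF (-t) = 1 - stdGaussianCDF t := by
  have key : stdGaussianCDF (-t) = ∫ x in Set.Ioi t, gaussianPDFReal 0 1 x := by
    rw [sgCDF_eq]
    have : ∫ x in Set.Iic (-t), gaussianPDFReal 0 1 x
        = ∫ x in Set.Iic (-t), gaussianPDFReal 0 1 (-x) := by
      simp_rw [sgPDF_even]
    rw [this, integral_comp_neg_Iic, neg_neg]
  have part : stdGaussianCDF t + ∫ x in Set.Ioi t, gaussianPDFReal 0 1 x = 1 := by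
    rw [sgCDF_eq, ← setIntegral_union (Set.Iic_disjoint_Ioi le_rfl) measurableSet_Ioi
      (sgInt _) (sgInt _), Set.Iic_union_Ioi, setIntegral_univ]
    exact integral_gaussianPDFReal_eq_one 0 one_ne_zero
  rw [key]; linarith

lemma sgCDF_zero : stdGaussianCDF 0 = 1 / 2 := by
  have := sgCDF_neg 0
  rw [neg_zero] at this; linarith

lemma sgCDF_pos (t : ℝ) : 0 < stdGaussianCDF t := by
  have h1 : stdGaussianCDF (t - 1) < stdGaussianCDF t := sgCDF_strictMono (by linarith)
  have h2 : 0 ≤ stdGaussianCDF (t - 1) := ENNReal.toReal_nonneg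
  linarith

lemma sgCDF_lt_one (t : ℝ) : stdGaussianCDF t < 1 := by
  have := sgCDF_neg t
  have := sgCDF_pos (-t)
  linarith

lemma sgCDF_tendsto_one : Filter.Tendsto stdGaussianCDF Filter.atTop (nhds 1) := by
  have h : Filter.Tendsto (fun t => (gaussianReal 0 1) (Set.Iic t)) Filter.atTop
      (nhds ((gaussianReal 0 1) Set.univ)) := tendsto_measure_Iic_atTop _
  rw [measure_univ] at h
  have := (ENNReal.tendsto_toReal (by norm_num : (1 : ENNReal) ≠ ⊤)).comp h
  rw [ENNReal.toReal_one] at this; exact this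

lemma sgCDF_surj {q : ℝ} (h0 : 0 < q) (h1 : q < 1) : ∃ t, stdGaussianCDF t = q := by
  have hb : ∃ b, q < stdGaussianCDF b :=
    (sgCDF_tendsto_one.eventually (eventually_gt_nhds h1)).exists
  obtain ⟨b, hbq⟩ := hb
  have hb' : ∃ b', 1 - q < stdGaussianCDF b' :=
    (sgCDF_tendsto_one.eventually (eventually_gt_nhds (by linarith))).exists
  obtain ⟨b', hb'q⟩ := hb'
  have ha : stdGaussianCDF (-b') < q := by
    rw [sgCDF_neg]; linarith
  have hab : -b' ≤ b := by
    by_contra hc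
    push_neg at hc
    exact absurd (sgCDF_strictMono hc) (by linarith)
  have : q ∈ Set.Icc (stdGaussianCDF (-b')) (stdGaussianCDF b) := ⟨ha.le, hbq.le⟩
  obtain ⟨t, _, ht⟩ := intermediate_value_Icc hab sgCDF_continuous.continuousOn this
  exact ⟨t, ht⟩

lemma sgQuantile_spec {q : ℝ} (h0 : 0 < q) (h1 : q < 1) :
    stdGaussianCDF (stdGaussianQuantile q) = q ∧
      ∀ s, q ≤ stdGaussianCDF s ↔ stdGaussianQuantile q ≤ s := by
  obtain ⟨t₀, ht₀⟩ := sgCDF_surj h0 h1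
  have hset : {t : ℝ | q ≤ stdGaussianCDF t} = Set.Ici t₀ := by
    ext s
    simp only [Set.mem_setOf_eq, Set.mem_Ici, ← ht₀]
    exact sgCDF_strictMono.le_iff_le
  have hq : stdGaussianQuantile q = t₀ := by
    rw [stdGaussianQuantile, hset, csInf_Ici]
  refine ⟨by rw [hq, ht₀], fun s => ?_⟩
  rw [hq, ← ht₀]
  exact sgCDF_strictMono.le_iff_le

lemma sgQuantile_mono {q q' : ℝ} (h0 : 0 < q) (h : q ≤ q') (h1 : q' < 1) :
    stdGaussianQuantile q ≤ stdGaussianQuantile q' := by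
  obtain ⟨hq, _⟩ := sgQuantile_spec h0 (lt_of_le_of_lt h h1)
  obtain ⟨hq', _⟩ := sgQuantile_spec (lt_of_lt_of_le h0 h) h1
  have : stdGaussianCDF (stdGaussianQuantile q) ≤ stdGaussianCDF (stdGaussianQuantile q') := by
    rw [hq, hq']; exact h
  exact sgCDF_strictMono.le_iff_le.1 this

lemma sgQuantile_nonneg {q : ℝ} (h0 : 1 / 2 ≤ q) (h1 : q < 1) :
    0 ≤ stdGaussianQuantile q := by
  obtain ⟨hq, _⟩ := sgQuantile_spec (by linarith) h1
  have : stdGaussianCDF 0 ≤ stdGaussianCDF (stdGaussianQuantile q) := by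
    rw [hq, sgCDF_zero]; exact h0
  exact sgCDF_strictMono.le_iff_le.1 this


lemma sgCDF_compl (t : ℝ) : 1 - stdGaussianCDF t = ∫ x in Set.Ioi t, gaussianPDFReal 0 1 x := by
  have part : stdGaussianCDF t + ∫ x in Set.Ioi t, gaussianPDFReal 0 1 x = 1 := by
    rw [sgCDF_eq, ← setIntegral_union (Set.Iic_disjoint_Ioi le_rfl) measurableSet_Ioi
      (sgInt _) (sgInt _), Set.Iic_union_Ioi, setIntegral_univ]
    exact integral_gaussianPDFReal_eq_one 0 one_ne_zero
  linarith

lemma sgPDF_le_K_exp_neg (x : ℝ) :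
    gaussianPDFReal 0 1 x ≤ Real.exp (-x) := by
  rw [gaussianPDFReal]
  have hK : (Real.sqrt (2 * π * (1 : NNReal)))⁻¹ * Real.exp (1/2) ≤ 1 := by
    rw [show ((1 : NNReal) : ℝ) = 1 by norm_num, mul_one]
    rw [inv_mul_le_iff₀ (Real.sqrt_pos.2 (by positivity))]
    rw [show Real.exp (1/2) = Real.exp ((1:ℝ)/2) by norm_num]
    have : Real.exp ((1:ℝ)/2) ^ 2 ≤ 2 * π := by
      rw [← Real.exp_nat_mul]
      norm_num
      nlinarith [Real.exp_one_lt_d9, Real.pi_gt_three]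
    nlinarith [Real.sq_sqrt (by positivity : (0:ℝ) ≤ 2 * π), Real.sqrt_nonneg (2*π),
      Real.exp_pos ((1:ℝ)/2)]
  have hexp : Real.exp (-(x - 0) ^ 2 / (2 * (1 : NNReal))) ≤ Real.exp (1/2) * Real.exp (-x) := by
    rw [← Real.exp_add, Real.exp_le_exp]
    have h1 : ((1 : NNReal) : ℝ) = 1 := by norm_num
    rw [h1]
    nlinarith [sq_nonneg (x - 1)]
  calc (Real.sqrt (2 * π * (1 : NNReal)))⁻¹ * Real.exp (-(x - 0) ^ 2 / (2 * (1 : NNReal)))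
      ≤ (Real.sqrt (2 * π * (1 : NNReal)))⁻¹ * (Real.exp (1/2) * Real.exp (-x)) := by
        apply mul_le_mul_of_nonneg_left hexp
        positivity
    _ = ((Real.sqrt (2 * π * (1 : NNReal)))⁻¹ * Real.exp (1/2)) * Real.exp (-x) := by ring
    _ ≤ 1 * Real.exp (-x) := by
        apply mul_le_mul_of_nonneg_right hK (Real.exp_pos _).le
    _ = Real.exp (-x) := one_mul _

lemma sgTail (t : ℝ) : 1 - stdGaussianCDF t ≤ Real.exp (-t) := by
  rw [sgCDF_compl]
  have hmono : ∫ x in Set.Ioi t, gaussianPDFReal 0 1 x ≤ ∫ x in Set.Ioi t, Real.exp (-x) := by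
    apply setIntegral_mono_on (sgInt _) _ measurableSet_Ioi fun x _ => sgPDF_le_K_exp_neg x
    simpa using exp_neg_integrableOn_Ioi t one_pos
  calc ∫ x in Set.Ioi t, gaussianPDFReal 0 1 x ≤ ∫ x in Set.Ioi t, Real.exp (-x) := hmono
    _ = Real.exp (-t) := integral_exp_neg_Ioi t

lemma sgQuantile_le {α : ℝ} (h0 : 0 < α) (h1 : α ≤ 1/2) :
    stdGaussianQuantile (1 - α) ≤ 2 / Real.sqrt α := by
  set t := 2 / Real.sqrt α with ht
  have hsα : 0 < Real.sqrt α := Real.sqrt_pos.2 h0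
  have htpos : 0 < t := by positivity
  have hexp : Real.exp (-t) ≤ α := by
    have h4 : Real.exp t ≥ (1 + t/2)^2 := by
      have := Real.add_one_le_exp (t/2)
      have h2 : Real.exp (t/2) ^ 2 = Real.exp t := by
        rw [← Real.exp_nat_mul]; norm_num
        congr 1; ring
      nlinarith [Real.exp_pos (t/2)]
    have h5 : (t/2)^2 = 1/α := by
      rw [ht]; rw [div_pow, div_pow]
      rw [Real.sq_sqrt h0.le]
      field_simp
    have h6 : Real.exp t ≥ 1/α := by nlinarith [htpos]
    rw [Real.exp_neg]
    rw [inv_le_comm₀ (Real.exp_pos t) h0, ← one_div]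
    exact h6
  have hΦ : 1 - α ≤ stdGaussianCDF t := by
    have := sgTail t
    linarith
  exact ((sgQuantile_spec (by linarith) (by linarith)).2 t).1 hΦ


variable {d : ℕ} {S : Matrix (Fin d) (Fin d) ℝ}

lemma qf_nonneg (hS : S.PosSemidef) (u : EuclideanSpace ℝ (Fin d)) : 0 ≤ quadForm d S u := by
  simpa [quadForm] using hS.dotProduct_mulVec_nonneg (fun i => u i)

lemma qf_pos (hS : S.PosDef) {u : EuclideanSpace ℝ (Fin d)} (hu : u ≠ 0) :
    0 < quadForm d S u := by
  have h : (fun i => u i) ≠ (0 : Fin d → ℝ) := by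
    intro h
    exact hu (by ext i; simpa using congrFun h i)
  simpa [quadForm] using hS.dotProduct_mulVec_pos h

lemma qf_neg (u : EuclideanSpace ℝ (Fin d)) : quadForm d S (-u) = quadForm d S u := by
  simp only [quadForm]
  rw [show (fun i => (-u) i) = -(fun i => u i) from rfl, Matrix.mulVec_neg,
    dotProduct_neg, neg_dotProduct, neg_neg]

lemma dot_symm (hS : S.PosDef) (u v : Fin d → ℝ) :
    dotProduct u (S.mulVec v) = dotProduct v (S.mulVec u) := by
  rw [Matrix.dotProduct_mulVec, ← Matrix.mulVec_transpose]
  have hsymm : Sᵀ = S := by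
    have := hS.1
    rwa [Matrix.IsHermitian, Matrix.conjTranspose_eq_transpose_of_trivial] at this
  rw [hsymm, dotProduct_comm]

lemma qf_cs (hS : S.PosDef) (u v : EuclideanSpace ℝ (Fin d)) :
    dotProduct (fun i => u i) (S.mulVec (fun i => v i)) ≤
      Real.sqrt (quadForm d S u) * Real.sqrt (quadForm d S v) := by
  set a := quadForm d S v with ha
  set b := 2 * dotProduct (fun i => u i) (S.mulVec (fun i => v i)) with hb
  set c := quadForm d S u with hc
  have hquad : ∀ t : ℝ, 0 ≤ a * (t * t) + b * t + c := by
    intro t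
    have h0 : 0 ≤ dotProduct ((fun i => u i) + t • (fun i => v i))
        (S.mulVec ((fun i => u i) + t • (fun i => v i))) := by
      simpa using hS.posSemidef.dotProduct_mulVec_nonneg ((fun i => u i) + t • (fun i => v i))
    have hexp : dotProduct ((fun i => u i) + t • (fun i => v i))
        (S.mulVec ((fun i => u i) + t • (fun i => v i)))
        = a * (t * t) + b * t + c := by
      rw [Matrix.mulVec_add, add_dotProduct, dotProduct_add,
        dotProduct_add, Matrix.mulVec_smul, smul_dotProduct,
        dotProduct_smul, smul_dotProduct, dotProduct_smul]
      have hsym := dot_symm hS (fun i => v i) (fun i => u i)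
      simp only [smul_eq_mul]
      rw [ha, hb, hc, quadForm, quadForm]
      rw [hsym]
      ring
    rw [← hexp]; exact h0
  have hdisc : discrim a b c ≤ 0 := by
    rcases eq_or_ne a 0 with h | h
    · -- a = 0 : then b must be 0 else quadratic goes negative; but use discrim directly
      rw [discrim, h]
      have hb0 : b = 0 := by
        by_contra hb0
        -- linear function b*t + c ≥ 0 for all t forces b = 0
        have h1 := hquad ((-c - 1) / b)
        have h2 := hquad 0
        rw [h] at h1
        field_simp at h1
        rw [le_div_iff₀ (lt_of_le_of_ne (sq_nonneg b) (Ne.symm (pow_ne_zero 2 hb0)))] at h1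
        nlinarith [h1, h2, lt_of_le_of_ne (sq_nonneg b) (Ne.symm (pow_ne_zero 2 hb0))]
      rw [hb0]; norm_num
    · exact discrim_le_zero hquad
  rw [discrim] at hdisc
  have hab : (dotProduct (fun i => u i) (S.mulVec fun i => v i)) ^ 2 ≤ c * a := by
    rw [hb] at hdisc; nlinarith
  have hca : Real.sqrt c * Real.sqrt a = Real.sqrt (c * a) := by
    rw [← Real.sqrt_mul (qf_nonneg hS.posSemidef u)]
  calc dotProduct (fun i => u i) (S.mulVec fun i => v i)
      ≤ |dotProduct (fun i => u i) (S.mulVec fun i => v i)| := le_abs_self _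
    _ = Real.sqrt ((dotProduct (fun i => u i) (S.mulVec fun i => v i)) ^ 2) := by
        rw [Real.sqrt_sq_eq_abs]
    _ ≤ Real.sqrt (c * a) := Real.sqrt_le_sqrt hab
    _ = Real.sqrt c * Real.sqrt a := hca.symm

lemma qf_bound (u : EuclideanSpace ℝ (Fin d)) (hu : ‖u‖ = 1) :
    quadForm d S u ≤ ∑ i, ∑ j, |S i j| := by
  have habs : ∀ i, |u i| ≤ 1 := by
    intro i
    have h1 : |u i| ≤ ‖u‖ := by
      rw [EuclideanSpace.norm_eq]
      rw [show |u i| = Real.sqrt (|u i|^2) by rw [Real.sqrt_sq (abs_nonneg _)]]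
      apply Real.sqrt_le_sqrt
      have h2 : |u i| ^ 2 ≤ ∑ j, ‖u j‖ ^ 2 := by
        have h3 : |u i| ^ 2 = ‖u i‖ ^ 2 := by rw [Real.norm_eq_abs]
        rw [h3]
        exact Finset.single_le_sum (f := fun j => ‖u j‖ ^ 2) (fun j _ => by positivity)
          (Finset.mem_univ i)
      exact h2
    rwa [hu] at h1
  rw [quadForm, dotProduct]
  calc ∑ i, u i * S.mulVec (fun j => u j) i
      ≤ ∑ i, ∑ j, |S i j| := by
        apply Finset.sum_le_sum
        intro i _
        rw [Matrix.mulVec, dotProduct]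
        rw [Finset.mul_sum]
        apply Finset.sum_le_sum
        intro j _
        calc u i * (S i j * u j) ≤ |u i * (S i j * u j)| := le_abs_self _
          _ = |u i| * |S i j| * |u j| := by rw [abs_mul, abs_mul]; ring
          _ ≤ 1 * |S i j| * 1 := by
              apply mul_le_mul (mul_le_mul (habs i) le_rfl (abs_nonneg _) zero_le_one)
                (habs j) (abs_nonneg _) (by positivity)
          _ = |S i j| := by ring


lemma sep_lemma {F : Type*} [NormedAddCommGroup F] [InnerProductSpace ℝ F]
    [CompleteSpace F] {C : Set F} (hconv : Convex ℝ C) (hcl : IsClosed C)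
    (hne : C.Nonempty) {x : F} {r : ℝ} (hr : 0 ≤ r)
    (h : ∀ u : F, ‖u‖ = 1 → ∃ y ∈ C, ⟪u, x⟫ ≤ ⟪u, y⟫ + r) :
    ∃ y ∈ C, dist x y ≤ r := by
  obtain ⟨p, hpC, hp⟩ := exists_norm_eq_iInf_of_complete_convex hne hcl.isComplete hconv x
  have hvar : ∀ w ∈ C, ⟪x - p, w - p⟫ ≤ 0 :=
    (norm_eq_iInf_iff_real_inner_le_zero hconv hpC).1 hp
  by_cases hd : ‖x - p‖ ≤ r
  · exact ⟨p, hpC, by rwa [dist_eq_norm]⟩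
  push_neg at hd
  exfalso
  set δ := ‖x - p‖ with hδ
  have hδpos : 0 < δ := lt_of_le_of_lt hr hd
  set u := δ⁻¹ • (x - p) with hu
  have hunorm : ‖u‖ = 1 := by
    rw [hu, norm_smul, norm_inv, Real.norm_eq_abs, abs_of_pos hδpos, ← hδ,
      inv_mul_cancel₀ hδpos.ne']
  obtain ⟨y, hyC, hxy⟩ := h u hunorm
  have h1 : ⟪u, x⟫ - ⟪u, y⟫ = δ⁻¹ * (⟪x - p, x - p⟫ + ⟪x - p, p - y⟫) := by
    rw [hu, real_inner_smul_left, real_inner_smul_left, ← mul_sub, ← inner_sub_right,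
      show x - y = (x - p) + (p - y) by abel, inner_add_right]
  have h2 : ⟪x - p, p - y⟫ ≥ 0 := by
    have := hvar y hyC
    have heq : ⟪x - p, p - y⟫ = -⟪x - p, y - p⟫ := by
      rw [← inner_neg_right]; congr 1; abel
    rw [heq]; linarith
  have h3 : ⟪x - p, x - p⟫ = δ ^ 2 := by
    rw [real_inner_self_eq_norm_sq, hδ]
  have h4 : ⟪u, x⟫ - ⟪u, y⟫ ≥ δ := by
    rw [h1, h3]
    have : δ⁻¹ * (δ ^ 2 + ⟪x - p, p - y⟫) ≥ δ⁻¹ * δ ^ 2 := by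
      apply mul_le_mul_of_nonneg_left (by linarith) (by positivity)
    calc δ⁻¹ * (δ ^ 2 + ⟪x - p, p - y⟫) ≥ δ⁻¹ * δ ^ 2 := this
      _ = δ := by field_simp [pow_two]
  linarith


noncomputable section

variable {d : ℕ}

/-- the candidate depth region: an ellipsoid-like convex body -/
def sK (d : ℕ) (m : EuclideanSpace ℝ (Fin d)) (S : Matrix (Fin d) (Fin d) ℝ) (c : ℝ) :
    Set (EuclideanSpace ℝ (Fin d)) :=
  {x | ∀ u : Metric.sphere (0 : EuclideanSpace ℝ (Fin d)) 1,
    ⟪(u : EuclideanSpace ℝ (Fin d)), x⟫ ≤ ⟪(u : EuclideanSpace ℝ (Fin d)), m⟫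
      + c * Real.sqrt (quadForm d S u)}

variable {m m₁ m₂ : EuclideanSpace ℝ (Fin d)} {S S₁ S₂ : Matrix (Fin d) (Fin d) ℝ} {c c₁ c₂ : ℝ}

lemma unit_mem_sphere {u : EuclideanSpace ℝ (Fin d)} (hu : ‖u‖ = 1) :
    u ∈ Metric.sphere (0 : EuclideanSpace ℝ (Fin d)) 1 := by
  simp [mem_sphere_iff_norm, hu]

lemma inner_eq_dot (u x : EuclideanSpace ℝ (Fin d)) :
    ⟪u, x⟫ = dotProduct (fun i => u i) (fun i => x i) := by
  simp [PiLp.inner_apply, RCLike.inner_apply, starRingEnd_apply, dotProduct, mul_comm]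

lemma sK_convex : Convex ℝ (sK d m S c) := by
  intro x hx y hy a b ha hb hab
  intro u
  have h1 := hx u
  have h2 := hy u
  rw [inner_add_right, real_inner_smul_right, real_inner_smul_right]
  calc a * ⟪(u : EuclideanSpace ℝ (Fin d)), x⟫ + b * ⟪(u : EuclideanSpace ℝ (Fin d)), y⟫
      ≤ a * (⟪(u : EuclideanSpace ℝ (Fin d)), m⟫ + c * Real.sqrt (quadForm d S u))
        + b * (⟪(u : EuclideanSpace ℝ (Fin d)), m⟫ + c * Real.sqrt (quadForm d S u)) := by
        apply add_le_add (mul_le_mul_of_nonneg_left h1 ha) (mul_le_mul_of_nonneg_left h2 hb)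
    _ = ⟪(u : EuclideanSpace ℝ (Fin d)), m⟫ + c * Real.sqrt (quadForm d S u) := by
        rw [← add_mul, hab]; ring

lemma sK_closed : IsClosed (sK d m S c) := by
  have : sK d m S c = ⋂ u : Metric.sphere (0 : EuclideanSpace ℝ (Fin d)) 1,
      {x | ⟪(u : EuclideanSpace ℝ (Fin d)), x⟫ ≤ ⟪(u : EuclideanSpace ℝ (Fin d)), m⟫
        + c * Real.sqrt (quadForm d S u)} := by
    ext x; simp [sK, Set.mem_iInter]
  rw [this]
  exact isClosed_iInter fun u => isClosed_le (Continuous.inner continuous_const continuous_id)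
    continuous_const

lemma sK_mem_center (hS : S.PosDef) (hc : 0 ≤ c) : m ∈ sK d m S c := by
  intro u
  have : 0 ≤ c * Real.sqrt (quadForm d S u) := by positivity
  linarith

lemma sK_subset_ball (hc : 0 ≤ c) :
    sK d m S c ⊆ Metric.closedBall m (c * Real.sqrt (∑ i, ∑ j, |S i j|)) := by
  intro x hx
  rw [Metric.mem_closedBall, dist_eq_norm]
  rcases eq_or_ne x m with h | h
  · rw [h, sub_self, norm_zero]; positivity
  have hxm : (0:ℝ) < ‖x - m‖ := by
    rw [norm_pos_iff]; exact sub_ne_zero_of_ne h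
  set u := ‖x - m‖⁻¹ • (x - m) with hu
  have hunorm : ‖u‖ = 1 := by
    rw [hu, norm_smul, norm_inv, Real.norm_eq_abs, abs_of_pos hxm, inv_mul_cancel₀ hxm.ne']
  have hmem := hx ⟨u, unit_mem_sphere hunorm⟩
  have hinner : ⟪u, x⟫ - ⟪u, m⟫ = ‖x - m‖ := by
    rw [← inner_sub_right, hu, real_inner_smul_left, real_inner_self_eq_norm_sq]
    field_simp [pow_two]
  have hq : Real.sqrt (quadForm d S u) ≤ Real.sqrt (∑ i, ∑ j, |S i j|) :=
    Real.sqrt_le_sqrt (qf_bound u hunorm)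
  have : c * Real.sqrt (quadForm d S u) ≤ c * Real.sqrt (∑ i, ∑ j, |S i j|) :=
    mul_le_mul_of_nonneg_left hq hc
  simp only [Subtype.coe_mk] at hmem
  linarith

lemma sK_bounded (hc : 0 ≤ c) : Bornology.IsBounded (sK d m S c) :=
  Metric.isBounded_closedBall.subset (sK_subset_ball hc)

lemma sK_support (hS : S.PosDef) (hc : 0 ≤ c) {u : EuclideanSpace ℝ (Fin d)} (hu : ‖u‖ = 1) :
    ∃ p ∈ sK d m S c, ⟪u, p⟫ = ⟪u, m⟫ + c * Real.sqrt (quadForm d S u) := by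
  have hune : u ≠ 0 := by
    intro h; rw [h, norm_zero] at hu; norm_num at hu
  set σ := Real.sqrt (quadForm d S u) with hσ
  have hσpos : 0 < σ := Real.sqrt_pos.2 (qf_pos hS hune)
  set w : EuclideanSpace ℝ (Fin d) := WithLp.toLp 2 (fun i => S.mulVec (fun j => u j) i) with hw
  have hwdot : ∀ v : EuclideanSpace ℝ (Fin d),
      ⟪v, w⟫ = dotProduct (fun i => v i) (S.mulVec (fun j => u j)) := by
    intro v; rw [inner_eq_dot]
  refine ⟨m + (c / σ) • w, ?_, ?_⟩
  · intro v
    rw [inner_add_right, real_inner_smul_right, hwdot]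
    have hcs : dotProduct (fun i => (v:EuclideanSpace ℝ (Fin d)) i)
        (S.mulVec (fun j => u j)) ≤ Real.sqrt (quadForm d S v) * σ := qf_cs hS v u
    have h2 : (c / σ) * dotProduct (fun i => (v:EuclideanSpace ℝ (Fin d)) i)
        (S.mulVec (fun j => u j)) ≤ (c / σ) * (Real.sqrt (quadForm d S v) * σ) :=
      mul_le_mul_of_nonneg_left hcs (by positivity)
    have h3 : (c / σ) * (Real.sqrt (quadForm d S v) * σ) = c * Real.sqrt (quadForm d S v) := by
      field_simp
    linarith
  · rw [inner_add_right, real_inner_smul_right, hwdot]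
    have hqq : dotProduct (fun i => u i) (S.mulVec (fun j => u j)) = σ ^ 2 := by
      rw [hσ, Real.sq_sqrt (qf_nonneg hS.posSemidef u)]
      rfl
    rw [hqq]
    field_simp

lemma sK_nonempty (hS : S.PosDef) (hc : 0 ≤ c) : (sK d m S c).Nonempty :=
  ⟨m, sK_mem_center hS hc⟩

lemma sK_dist_le (hS₁ : S₁.PosDef) (hS₂ : S₂.PosDef) (hc₂ : 0 ≤ c₂) {r : ℝ} (hr : 0 ≤ r)
    (h : ∀ u : Metric.sphere (0 : EuclideanSpace ℝ (Fin d)) 1,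
      ⟪(u : EuclideanSpace ℝ (Fin d)), m₁⟫ + c₁ * Real.sqrt (quadForm d S₁ u)
        ≤ ⟪(u : EuclideanSpace ℝ (Fin d)), m₂⟫ + c₂ * Real.sqrt (quadForm d S₂ u) + r) :
    ∀ x ∈ sK d m₁ S₁ c₁, ∃ y ∈ sK d m₂ S₂ c₂, dist x y ≤ r := by
  intro x hx
  apply sep_lemma sK_convex sK_closed (sK_nonempty hS₂ hc₂) hr
  intro u hu
  obtain ⟨p, hp, hpv⟩ := sK_support (m := m₂) hS₂ hc₂ hu
  refine ⟨p, hp, ?_⟩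
  rw [hpv]
  have h1 := hx ⟨u, unit_mem_sphere hu⟩
  have h2 := h ⟨u, unit_mem_sphere hu⟩
  simp only [Subtype.coe_mk] at h1 h2
  linarith

lemma sK_hausdorff_le (hS₁ : S₁.PosDef) (hS₂ : S₂.PosDef) (hc₁ : 0 ≤ c₁) (hc₂ : 0 ≤ c₂)
    {r : ℝ} (hr : 0 ≤ r)
    (h12 : ∀ u : Metric.sphere (0 : EuclideanSpace ℝ (Fin d)) 1,
      ⟪(u : EuclideanSpace ℝ (Fin d)), m₁⟫ + c₁ * Real.sqrt (quadForm d S₁ u)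
        ≤ ⟪(u : EuclideanSpace ℝ (Fin d)), m₂⟫ + c₂ * Real.sqrt (quadForm d S₂ u) + r)
    (h21 : ∀ u : Metric.sphere (0 : EuclideanSpace ℝ (Fin d)) 1,
      ⟪(u : EuclideanSpace ℝ (Fin d)), m₂⟫ + c₂ * Real.sqrt (quadForm d S₂ u)
        ≤ ⟪(u : EuclideanSpace ℝ (Fin d)), m₁⟫ + c₁ * Real.sqrt (quadForm d S₁ u) + r) :
    Metric.hausdorffDist (sK d m₁ S₁ c₁) (sK d m₂ S₂ c₂) ≤ r :=
  Metric.hausdorffDist_le_of_mem_dist hr (sK_dist_le hS₁ hS₂ hc₂ hr h12)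
    (sK_dist_le hS₂ hS₁ hc₁ hr h21)

lemma sK_edist_ne_top (hS₁ : S₁.PosDef) (hS₂ : S₂.PosDef) (hc₁ : 0 ≤ c₁) (hc₂ : 0 ≤ c₂) :
    EMetric.hausdorffEdist (sK d m₁ S₁ c₁) (sK d m₂ S₂ c₂) ≠ ⊤ :=
  Metric.hausdorffEdist_ne_top_of_nonempty_of_bounded (sK_nonempty hS₁ hc₁)
    (sK_nonempty hS₂ hc₂) (sK_bounded hc₁) (sK_bounded hc₂)

lemma sK_norm_le_hausdorff (hS₁ : S₁.PosDef) (hS₂ : S₂.PosDef) (hc : 0 ≤ c)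
    {s : ℝ} (hs : 0 ≤ s)
    (hb : ∀ u : Metric.sphere (0 : EuclideanSpace ℝ (Fin d)) 1,
      Real.sqrt (quadForm d S₂ u) ≤ Real.sqrt (quadForm d S₁ u) + s) :
    ‖m₁ - m₂‖ ≤ Metric.hausdorffDist (sK d m₁ S₁ c) (sK d m₂ S₂ c) + c * s := by
  rcases eq_or_ne m₁ m₂ with h | h
  · rw [h, sub_self, norm_zero]
    have := Metric.hausdorffDist_nonneg (s := sK d m₂ S₁ c) (t := sK d m₂ S₂ c)
    nlinarith
  apply le_of_forall_pos_le_add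
  intro η hη
  have hΔ : (0:ℝ) < ‖m₁ - m₂‖ := by rw [norm_pos_iff]; exact sub_ne_zero_of_ne h
  set u := ‖m₁ - m₂‖⁻¹ • (m₁ - m₂) with hu
  have hunorm : ‖u‖ = 1 := by
    rw [hu, norm_smul, norm_inv, Real.norm_eq_abs, abs_of_pos hΔ, inv_mul_cancel₀ hΔ.ne']
  obtain ⟨p, hp, hpv⟩ := sK_support (m := m₁) hS₁ hc hunorm
  have hfin := sK_edist_ne_top (m₁ := m₁) (m₂ := m₂) (c₁ := c) (c₂ := c) hS₁ hS₂ hc hc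
  have hinf : Metric.infDist p (sK d m₂ S₂ c)
      ≤ Metric.hausdorffDist (sK d m₁ S₁ c) (sK d m₂ S₂ c) :=
    Metric.infDist_le_hausdorffDist_of_mem hp hfin
  have hlt : Metric.infDist p (sK d m₂ S₂ c)
      < Metric.hausdorffDist (sK d m₁ S₁ c) (sK d m₂ S₂ c) + η := by linarith
  obtain ⟨y, hy, hdy⟩ := (Metric.infDist_lt_iff (sK_nonempty hS₂ hc)).1 hlt
  have h1 := hy ⟨u, unit_mem_sphere hunorm⟩
  simp only [Subtype.coe_mk] at h1
  have h2 : ⟪u, p⟫ - ⟪u, y⟫ ≤ dist p y := by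
    rw [← inner_sub_right]
    calc ⟪u, p - y⟫ ≤ ‖u‖ * ‖p - y‖ := real_inner_le_norm u (p - y)
      _ = dist p y := by rw [hunorm, one_mul, dist_eq_norm]
  have h3 : ⟪u, m₁⟫ - ⟪u, m₂⟫ = ‖m₁ - m₂‖ := by
    rw [← inner_sub_right, hu, real_inner_smul_left, real_inner_self_eq_norm_sq]
    field_simp [pow_two]
  have h4 : c * Real.sqrt (quadForm d S₂ u) ≤ c * Real.sqrt (quadForm d S₁ u) + c * s := by
    have := hb ⟨u, unit_mem_sphere hunorm⟩
    simp only [Subtype.coe_mk] at this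
    nlinarith
  linarith
end


variable {d : ℕ}



section RegionEq

variable {m : EuclideanSpace ℝ (Fin d)} {S : Matrix (Fin d) (Fin d) ℝ}
  {μ : Measure (EuclideanSpace ℝ (Fin d))}

lemma measure_halfspace (hS : S.PosDef) [IsProbabilityMeasure μ]
    (hμ : ∀ u : EuclideanSpace ℝ (Fin d),
      Measure.map (fun x => ⟪u, x⟫) μ =
        gaussianReal ⟪u, m⟫ (Real.toNNReal (quadForm d S u)))
    {u : EuclideanSpace ℝ (Fin d)} (hu : u ≠ 0) (t : ℝ) :
    (μ {y | ⟪u, y⟫ ≤ t}).toReal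
      = stdGaussianCDF ((t - ⟪u, m⟫) / Real.sqrt (quadForm d S u)) := by
  have hqf : 0 < quadForm d S u := qf_pos hS hu
  set σ := Real.sqrt (quadForm d S u) with hσdef
  have hσ : 0 < σ := Real.sqrt_pos.2 hqf
  have hmeas : Measurable fun y : EuclideanSpace ℝ (Fin d) => ⟪u, y⟫ :=
    (innerSL ℝ u).continuous.measurable
  have h1 : {y : EuclideanSpace ℝ (Fin d) | ⟪u, y⟫ ≤ t}
      = (fun y : EuclideanSpace ℝ (Fin d) => ⟪u, y⟫) ⁻¹' (Set.Iic t) := rfl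
  rw [h1, ← Measure.map_apply hmeas measurableSet_Iic, hμ u]
  -- now express the gaussian with mean/variance via affine image of std gaussian
  have hv : (NNReal.mk (σ ^ 2) (sq_nonneg σ) * 1 : NNReal) = Real.toNNReal (quadForm d S u) := by
    ext
    simp only [NNReal.coe_mul, NNReal.coe_one, mul_one, Real.coe_toNNReal _ hqf.le,
      NNReal.coe_mk]
    simp [hσdef, Real.sq_sqrt hqf.le]
  have hmap1 : (gaussianReal 0 1).map (fun x => σ * x)
      = gaussianReal 0 (Real.toNNReal (quadForm d S u)) := by
    have := gaussianReal_map_const_mul (μ := 0) (v := 1) σ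
    simp only [mul_zero] at this
    rw [show (fun x => σ * x) = (σ * ·) from rfl, this, hv]
  have hmap2 : (gaussianReal 0 (Real.toNNReal (quadForm d S u))).map (fun x => x + ⟪u, m⟫)
      = gaussianReal ⟪u, m⟫ (Real.toNNReal (quadForm d S u)) := by
    have := gaussianReal_map_add_const (μ := 0) (v := Real.toNNReal (quadForm d S u)) ⟪u, m⟫
    simpa using this
  have hm1 : Measurable fun x : ℝ => x + ⟪u, m⟫ := by fun_prop
  have hm2 : Measurable fun x : ℝ => σ * x := by fun_prop
  rw [← hmap2, ← hmap1, Measure.map_map hm1 hm2,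
    Measure.map_apply (hm1.comp hm2) measurableSet_Iic]
  have hpre : ((fun x => x + ⟪u, m⟫) ∘ fun x => σ * x) ⁻¹' Set.Iic t
      = Set.Iic ((t - ⟪u, m⟫) / σ) := by
    ext x
    simp only [Function.comp_apply, Set.mem_preimage, Set.mem_Iic]
    constructor
    · intro h
      rw [le_div_iff₀ hσ]
      nlinarith
    · intro h
      rw [le_div_iff₀ hσ] at h
      nlinarith
  rw [hpre, stdGaussianCDF]

lemma region_eq (hS : S.PosDef) [IsProbabilityMeasure μ]
    (hμ : ∀ u : EuclideanSpace ℝ (Fin d),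
      Measure.map (fun x => ⟪u, x⟫) μ =
        gaussianReal ⟪u, m⟫ (Real.toNNReal (quadForm d S u)))
    (hd : 0 < d) {α : ℝ} (hα0 : 0 < α) (hα : α ≤ 1 / 2) :
    hdRegion d μ α = sK d m S (stdGaussianQuantile (1 - α)) := by
  have hq0 : (0:ℝ) < 1 - α := by linarith
  have hq1 : 1 - α < 1 := by linarith
  obtain ⟨hQval, hQiff⟩ := sgQuantile_spec hq0 hq1
  set c := stdGaussianQuantile (1 - α) with hc
  haveI : Nonempty (Metric.sphere (0 : EuclideanSpace ℝ (Fin d)) 1) := by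
    refine ⟨⟨EuclideanSpace.single (⟨0, hd⟩ : Fin d) (1:ℝ), unit_mem_sphere ?_⟩⟩
    rw [EuclideanSpace.norm_single]; norm_num
  ext x
  have hdepth : ∀ u : Metric.sphere (0 : EuclideanSpace ℝ (Fin d)) 1,
      (μ {y | ⟪(u : EuclideanSpace ℝ (Fin d)), y⟫ ≤ ⟪(u : EuclideanSpace ℝ (Fin d)), x⟫}).toReal
        = stdGaussianCDF (⟪(u : EuclideanSpace ℝ (Fin d)), x - m⟫
            / Real.sqrt (quadForm d S u)) := by
    intro u
    have hune : (u : EuclideanSpace ℝ (Fin d)) ≠ 0 := by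
      intro h
      have := norm_eq_of_mem_sphere u
      rw [h, norm_zero] at this; norm_num at this
    rw [measure_halfspace hS hμ hune, inner_sub_right]
  have hdepth' : halfspaceDepth d μ x = ⨅ u : Metric.sphere (0 : EuclideanSpace ℝ (Fin d)) 1,
      stdGaussianCDF (⟪(u : EuclideanSpace ℝ (Fin d)), x - m⟫ / Real.sqrt (quadForm d S u)) := by
    rw [halfspaceDepth]
    exact iInf_congr hdepth
  simp only [hdRegion, Set.mem_setOf_eq, hdepth']
  rw [le_ciInf_iff ⟨0, by rintro y ⟨u, rfl⟩; exact (sgCDF_pos _).le⟩]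
  constructor
  · intro h u
    have hune : (u : EuclideanSpace ℝ (Fin d)) ≠ 0 := by
      intro hz
      have := norm_eq_of_mem_sphere u
      rw [hz, norm_zero] at this; norm_num at this
    have hσ : 0 < Real.sqrt (quadForm d S (u : EuclideanSpace ℝ (Fin d))) :=
      Real.sqrt_pos.2 (qf_pos hS hune)
    have hnegmem : -(u : EuclideanSpace ℝ (Fin d)) ∈
        Metric.sphere (0 : EuclideanSpace ℝ (Fin d)) 1 := by
      apply unit_mem_sphere
      rw [norm_neg, norm_eq_of_mem_sphere]
    have h2 := h ⟨-(u : EuclideanSpace ℝ (Fin d)), hnegmem⟩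
    simp only [Subtype.coe_mk] at h2
    rw [qf_neg, inner_neg_left, neg_div, sgCDF_neg] at h2
    -- h2 : α ≤ 1 - Φ(s), so Φ(s) ≤ 1 - α, so s ≤ c
    set s := ⟪(u : EuclideanSpace ℝ (Fin d)), x - m⟫
      / Real.sqrt (quadForm d S (u : EuclideanSpace ℝ (Fin d))) with hs
    have h3 : stdGaussianCDF s ≤ 1 - α := by linarith
    have h4 : s ≤ c := by
      by_contra h5
      push_neg at h5
      have := sgCDF_strictMono h5
      rw [hQval] at this
      linarith
    rw [hs, div_le_iff₀ hσ] at h4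
    rw [inner_sub_right] at h4
    linarith
  · intro h u
    have hune : (u : EuclideanSpace ℝ (Fin d)) ≠ 0 := by
      intro hz
      have := norm_eq_of_mem_sphere u
      rw [hz, norm_zero] at this; norm_num at this
    have hσ : 0 < Real.sqrt (quadForm d S (u : EuclideanSpace ℝ (Fin d))) :=
      Real.sqrt_pos.2 (qf_pos hS hune)
    have hnegmem : -(u : EuclideanSpace ℝ (Fin d)) ∈
        Metric.sphere (0 : EuclideanSpace ℝ (Fin d)) 1 := by
      apply unit_mem_sphere
      rw [norm_neg, norm_eq_of_mem_sphere]
    have h2 := h ⟨-(u : EuclideanSpace ℝ (Fin d)), hnegmem⟩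
    simp only [Subtype.coe_mk] at h2
    rw [qf_neg, inner_neg_left, inner_neg_left] at h2
    -- h2 : -⟪u,x⟫ ≤ -⟪u,m⟫ + c * σ
    set σ := Real.sqrt (quadForm d S (u : EuclideanSpace ℝ (Fin d))) with hσdef
    set s := ⟪(u : EuclideanSpace ℝ (Fin d)), x - m⟫ / σ with hs
    have h3 : -s ≤ c := by
      rw [hs, neg_div' , div_le_iff₀ hσ]
      rw [inner_sub_right]
      linarith
    have h4 : stdGaussianCDF (-s) ≤ 1 - α := by
      rcases eq_or_lt_of_le h3 with h5 | h5
      · rw [h5, hQval]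
      · exact le_of_lt (by rw [← hQval]; exact sgCDF_strictMono h5)
    rw [sgCDF_neg] at h4
    linarith

end RegionEq


section HF
variable {d : ℕ} {m₁ m₂ : EuclideanSpace ℝ (Fin d)} {S₁ S₂ : Matrix (Fin d) (Fin d) ℝ}
  {c c' : ℝ}

lemma sphere_norm (u : Metric.sphere (0 : EuclideanSpace ℝ (Fin d)) 1) :
    ‖(u : EuclideanSpace ℝ (Fin d))‖ = 1 := norm_eq_of_mem_sphere u

lemma sigma_le (hS : S₁.PosSemidef) (u : Metric.sphere (0 : EuclideanSpace ℝ (Fin d)) 1) :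
    Real.sqrt (quadForm d S₁ u) ≤ Real.sqrt (∑ i, ∑ j, |S₁ i j|) :=
  Real.sqrt_le_sqrt (qf_bound _ (sphere_norm u))

lemma ssup_bddAbove (hS₁ : S₁.PosSemidef) (hS₂ : S₂.PosSemidef) :
    BddAbove (Set.range fun u : Metric.sphere (0 : EuclideanSpace ℝ (Fin d)) 1 =>
      |Real.sqrt (quadForm d S₁ u) - Real.sqrt (quadForm d S₂ u)|) := by
  refine ⟨Real.sqrt (∑ i, ∑ j, |S₁ i j|) + Real.sqrt (∑ i, ∑ j, |S₂ i j|), ?_⟩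
  rintro y ⟨u, rfl⟩
  have h1 := sigma_le hS₁ u
  have h2 := sigma_le (S₁ := S₂) hS₂ u
  have h3 : (0:ℝ) ≤ Real.sqrt (quadForm d S₁ u) := Real.sqrt_nonneg _
  have h4 : (0:ℝ) ≤ Real.sqrt (quadForm d S₂ u) := Real.sqrt_nonneg _
  rw [abs_sub_le_iff]
  constructor <;> linarith

lemma ssup_nonneg [Nonempty (Metric.sphere (0 : EuclideanSpace ℝ (Fin d)) 1)]
    (hS₁ : S₁.PosSemidef) (hS₂ : S₂.PosSemidef) :
    0 ≤ ⨆ u : Metric.sphere (0 : EuclideanSpace ℝ (Fin d)) 1,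
      |Real.sqrt (quadForm d S₁ u) - Real.sqrt (quadForm d S₂ u)| := by
  obtain ⟨u⟩ := (inferInstance : Nonempty (Metric.sphere (0 : EuclideanSpace ℝ (Fin d)) 1))
  exact le_trans (abs_nonneg _) (le_ciSup (ssup_bddAbove hS₁ hS₂) u)

lemma HF_bound [Nonempty (Metric.sphere (0 : EuclideanSpace ℝ (Fin d)) 1)]
    (hS₁ : S₁.PosDef) (hS₂ : S₂.PosDef) (hc : 0 ≤ c) :
    |Metric.hausdorffDist (sK d m₁ S₁ c) (sK d m₂ S₂ c) - ‖m₁ - m₂‖|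
      ≤ c * ⨆ u : Metric.sphere (0 : EuclideanSpace ℝ (Fin d)) 1,
        |Real.sqrt (quadForm d S₁ u) - Real.sqrt (quadForm d S₂ u)| := by
  set Ssup := ⨆ u : Metric.sphere (0 : EuclideanSpace ℝ (Fin d)) 1,
    |Real.sqrt (quadForm d S₁ u) - Real.sqrt (quadForm d S₂ u)| with hSsup
  have hSs : 0 ≤ Ssup := ssup_nonneg hS₁.posSemidef hS₂.posSemidef
  have hle : ∀ u : Metric.sphere (0 : EuclideanSpace ℝ (Fin d)) 1,
      |Real.sqrt (quadForm d S₁ u) - Real.sqrt (quadForm d S₂ u)| ≤ Ssup :=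
    fun u => le_ciSup (ssup_bddAbove hS₁.posSemidef hS₂.posSemidef) u
  have hinner : ∀ u : Metric.sphere (0 : EuclideanSpace ℝ (Fin d)) 1,
      |⟪(u : EuclideanSpace ℝ (Fin d)), m₁⟫ - ⟪(u : EuclideanSpace ℝ (Fin d)), m₂⟫|
        ≤ ‖m₁ - m₂‖ := by
    intro u
    rw [← inner_sub_right, abs_le]
    constructor
    · have := real_inner_le_norm (u : EuclideanSpace ℝ (Fin d)) (m₂ - m₁)
      rw [sphere_norm, one_mul] at this
      have heq : ⟪(u : EuclideanSpace ℝ (Fin d)), m₂ - m₁⟫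
          = -⟪(u : EuclideanSpace ℝ (Fin d)), m₁ - m₂⟫ := by
        rw [← inner_neg_right]; congr 1; abel
      rw [heq] at this
      have hn : ‖m₂ - m₁‖ = ‖m₁ - m₂‖ := by rw [norm_sub_rev]
      linarith
    · have := real_inner_le_norm (u : EuclideanSpace ℝ (Fin d)) (m₁ - m₂)
      rw [sphere_norm, one_mul] at this
      linarith
  rw [abs_le]
  constructor
  · -- ‖m₁-m₂‖ - c*Ssup ≤ HF c
    have := sK_norm_le_hausdorff (m₁ := m₁) (m₂ := m₂) hS₁ hS₂ hc hSs (fun u => by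
      have h := hle u
      rw [abs_le] at h
      linarith [h.1])
    linarith
  · -- HF c ≤ ‖m₁-m₂‖ + c*Ssup
    have hr : 0 ≤ ‖m₁ - m₂‖ + c * Ssup := by positivity
    have h12 : ∀ u : Metric.sphere (0 : EuclideanSpace ℝ (Fin d)) 1,
        ⟪(u : EuclideanSpace ℝ (Fin d)), m₁⟫ + c * Real.sqrt (quadForm d S₁ u)
          ≤ ⟪(u : EuclideanSpace ℝ (Fin d)), m₂⟫ + c * Real.sqrt (quadForm d S₂ u)
            + (‖m₁ - m₂‖ + c * Ssup) := by
      intro u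
      have h1 := (abs_le.1 (hinner u)).2
      have h2 := (abs_le.1 (hle u)).2
      nlinarith
    have h21 : ∀ u : Metric.sphere (0 : EuclideanSpace ℝ (Fin d)) 1,
        ⟪(u : EuclideanSpace ℝ (Fin d)), m₂⟫ + c * Real.sqrt (quadForm d S₂ u)
          ≤ ⟪(u : EuclideanSpace ℝ (Fin d)), m₁⟫ + c * Real.sqrt (quadForm d S₁ u)
            + (‖m₁ - m₂‖ + c * Ssup) := by
      intro u
      have h1 := (abs_le.1 (hinner u)).1
      have h2 := (abs_le.1 (hle u)).1
      nlinarith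
    have := sK_hausdorff_le hS₁ hS₂ hc hc hr h12 h21
    linarith

lemma HF_self_le (hS : S₁.PosDef) (hc : 0 ≤ c) (hc' : 0 ≤ c') :
    Metric.hausdorffDist (sK d m₁ S₁ c) (sK d m₁ S₁ c')
      ≤ |c - c'| * Real.sqrt (∑ i, ∑ j, |S₁ i j|) := by
  set B := Real.sqrt (∑ i, ∑ j, |S₁ i j|) with hB
  have hB0 : 0 ≤ B := Real.sqrt_nonneg _
  have hr : 0 ≤ |c - c'| * B := by positivity
  apply sK_hausdorff_le hS hS hc hc' hr
  · intro u
    have h1 := sigma_le (S₁ := S₁) hS.posSemidef u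
    have h2 : (0:ℝ) ≤ Real.sqrt (quadForm d S₁ u) := Real.sqrt_nonneg _
    have h3 : (c - c') * Real.sqrt (quadForm d S₁ u) ≤ |c - c'| * B := by
      calc (c - c') * Real.sqrt (quadForm d S₁ u)
          ≤ |c - c'| * Real.sqrt (quadForm d S₁ u) :=
            mul_le_mul_of_nonneg_right (le_abs_self _) h2
        _ ≤ |c - c'| * B := mul_le_mul_of_nonneg_left h1 (abs_nonneg _)
    linarith
  · intro u
    have h1 := sigma_le (S₁ := S₁) hS.posSemidef u
    have h2 : (0:ℝ) ≤ Real.sqrt (quadForm d S₁ u) := Real.sqrt_nonneg _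
    have h3 : (c' - c) * Real.sqrt (quadForm d S₁ u) ≤ |c - c'| * B := by
      calc (c' - c) * Real.sqrt (quadForm d S₁ u)
          ≤ |c' - c| * Real.sqrt (quadForm d S₁ u) :=
            mul_le_mul_of_nonneg_right (le_abs_self _) h2
        _ = |c - c'| * Real.sqrt (quadForm d S₁ u) := by rw [abs_sub_comm]
        _ ≤ |c - c'| * B := mul_le_mul_of_nonneg_left h1 (abs_nonneg _)
    linarith

lemma HF_lipschitzOn (hS₁ : S₁.PosDef) (hS₂ : S₂.PosDef) (hc : 0 ≤ c) (hc' : 0 ≤ c') :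
    |Metric.hausdorffDist (sK d m₁ S₁ c) (sK d m₂ S₂ c)
      - Metric.hausdorffDist (sK d m₁ S₁ c') (sK d m₂ S₂ c')|
      ≤ |c - c'| * (Real.sqrt (∑ i, ∑ j, |S₁ i j|) + Real.sqrt (∑ i, ∑ j, |S₂ i j|)) := by
  have key : ∀ a b : ℝ, 0 ≤ a → 0 ≤ b →
      Metric.hausdorffDist (sK d m₁ S₁ a) (sK d m₂ S₂ a)
        ≤ Metric.hausdorffDist (sK d m₁ S₁ b) (sK d m₂ S₂ b)
          + |a - b| * (Real.sqrt (∑ i, ∑ j, |S₁ i j|) + Real.sqrt (∑ i, ∑ j, |S₂ i j|)) := by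
    intro a b ha hb
    have t1 : Metric.hausdorffDist (sK d m₁ S₁ a) (sK d m₂ S₂ a)
        ≤ Metric.hausdorffDist (sK d m₁ S₁ a) (sK d m₁ S₁ b)
          + Metric.hausdorffDist (sK d m₁ S₁ b) (sK d m₂ S₂ a) :=
      Metric.hausdorffDist_triangle (sK_edist_ne_top hS₁ hS₁ ha hb)
    have t2 : Metric.hausdorffDist (sK d m₁ S₁ b) (sK d m₂ S₂ a)
        ≤ Metric.hausdorffDist (sK d m₁ S₁ b) (sK d m₂ S₂ b)
          + Metric.hausdorffDist (sK d m₂ S₂ b) (sK d m₂ S₂ a) :=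
      Metric.hausdorffDist_triangle (sK_edist_ne_top hS₁ hS₂ hb hb)
    have t3 := HF_self_le (m₁ := m₁) hS₁ ha hb
    have t4 := HF_self_le (m₁ := m₂) hS₂ hb ha
    have t5 : |b - a| = |a - b| := abs_sub_comm b a
    rw [t5] at t4
    linarith
  rw [abs_sub_le_iff]
  exact ⟨by have := key c c' hc hc'; linarith, by
    have := key c' c hc' hc
    rw [abs_sub_comm] at this
    linarith⟩

end HF


theorem stmt_18 (d : ℕ)
    (m₁ m₂ : EuclideanSpace ℝ (Fin d)) (S₁ S₂ : Matrix (Fin d) (Fin d) ℝ)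
    (hS₁ : S₁.PosDef) (hS₂ : S₂.PosDef)
    (μ ν : Measure (EuclideanSpace ℝ (Fin d)))
    [IsProbabilityMeasure μ] [IsProbabilityMeasure ν]
    -- `μ = N(m₁, Σ₁)` and `ν = N(m₂, Σ₂)`
    (hμ : ∀ u : EuclideanSpace ℝ (Fin d),
      Measure.map (fun x => ⟪u, x⟫) μ =
        gaussianReal ⟪u, m₁⟫ (Real.toNNReal (quadForm d S₁ u)))
    (hν : ∀ u : EuclideanSpace ℝ (Fin d),
      Measure.map (fun x => ⟪u, x⟫) ν =
        gaussianReal ⟪u, m₂⟫ (Real.toNNReal (quadForm d S₂ u)))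
    (ε : ℝ) (hε : 0 ≤ ε) (hε2 : ε < 1 / 2) :
    |DR1eps d ε μ ν - ‖m₁ - m₂‖| ≤
      ((1 / 2 - ε)⁻¹ * ∫ α in ε..(1 / 2), |stdGaussianQuantile (1 - α)|) *
        ⨆ u : Metric.sphere (0 : EuclideanSpace ℝ (Fin d)) 1,
          |Real.sqrt (quadForm d S₁ u) - Real.sqrt (quadForm d S₂ u)| := by
  have hεle : ε ≤ 1 / 2 := hε2.le
  have hhalf : (0:ℝ) < 1 / 2 - ε := by linarith
  rcases Nat.eq_zero_or_pos d with hd0 | hd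
  · -- degenerate case d = 0
    subst hd0
    haveI hempty : IsEmpty (Metric.sphere (0 : EuclideanSpace ℝ (Fin 0)) 1) := by
      constructor
      rintro ⟨u, hu⟩
      have h1 : ‖u‖ = 1 := by rwa [mem_sphere_zero_iff_norm] at hu
      have h2 : ‖u‖ = 0 := by
        rw [EuclideanSpace.norm_eq]
        simp
      rw [h2] at h1
      norm_num at h1
    have hdepth : ∀ (ρ : Measure (EuclideanSpace ℝ (Fin 0))) x, halfspaceDepth 0 ρ x = 0 := by
      intro ρ x
      exact Real.iInf_of_isEmpty _
    have hreg : ∀ (ρ : Measure (EuclideanSpace ℝ (Fin 0))) α,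
        hdRegion 0 ρ α = {x : EuclideanSpace ℝ (Fin 0) | α ≤ 0} := by
      intro ρ α
      ext x
      simp [hdRegion, hdepth]
    have hzero : ∀ α : ℝ,
        Metric.hausdorffDist (hdRegion 0 μ α) (hdRegion 0 ν α) = 0 := by
      intro α
      rw [hreg, hreg]
      exact Metric.hausdorffDist_self_zero
    have hnorm : ‖m₁ - m₂‖ = 0 := by
      rw [EuclideanSpace.norm_eq]
      simp
    have hint : (∫ α in ε..(1/2 : ℝ),
        Metric.hausdorffDist (hdRegion 0 μ α) (hdRegion 0 ν α)) = 0 := by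
      rw [intervalIntegral.integral_congr (g := fun _ => (0:ℝ)) (fun α _ => hzero α)]
      simp
    have hDR : DR1eps 0 ε μ ν = 0 := by
      rw [DR1eps, hint, mul_zero]
    rw [hDR, hnorm]
    have hSsup : (⨆ u : Metric.sphere (0 : EuclideanSpace ℝ (Fin 0)) 1,
        |Real.sqrt (quadForm 0 S₁ u) - Real.sqrt (quadForm 0 S₂ u)|) = 0 :=
      Real.iSup_of_isEmpty _
    rw [hSsup, mul_zero]
    simp
  · -- main case d ≥ 1
    haveI hne : Nonempty (Metric.sphere (0 : EuclideanSpace ℝ (Fin d)) 1) := by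
      refine ⟨⟨EuclideanSpace.single (⟨0, hd⟩ : Fin d) (1:ℝ), unit_mem_sphere ?_⟩⟩
      rw [EuclideanSpace.norm_single]; norm_num
    set Δ := ‖m₁ - m₂‖ with hΔ
    set Ssup := ⨆ u : Metric.sphere (0 : EuclideanSpace ℝ (Fin d)) 1,
      |Real.sqrt (quadForm d S₁ u) - Real.sqrt (quadForm d S₂ u)| with hSsup
    have hSs0 : 0 ≤ Ssup := ssup_nonneg hS₁.posSemidef hS₂.posSemidef
    set K := Real.sqrt (∑ i, ∑ j, |S₁ i j|) + Real.sqrt (∑ i, ∑ j, |S₂ i j|) with hK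
    have hK0 : 0 ≤ K := by positivity
    -- the continuous extension of c ↦ hausdorffDist (sK c) (sK c)
    set φ : ℝ → ℝ := fun c => Metric.hausdorffDist (sK d m₁ S₁ (max c 0)) (sK d m₂ S₂ (max c 0))
      with hφ
    have hφcont : Continuous φ := by
      apply (LipschitzWith.of_dist_le_mul (K := Real.toNNReal K) ?_).continuous
      intro a b
      rw [Real.dist_eq, Real.dist_eq, Real.coe_toNNReal _ hK0]
      calc |φ a - φ b| ≤ |max a 0 - max b 0| * K :=
            HF_lipschitzOn hS₁ hS₂ (le_max_right a 0) (le_max_right b 0)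
        _ ≤ |a - b| * K := mul_le_mul_of_nonneg_right (abs_max_sub_max_le_abs a b 0) hK0
        _ = K * |a - b| := mul_comm _ _
    -- quantities on the interval
    have hmem : ∀ α ∈ Set.Ioc ε (1/2 : ℝ), 0 < α ∧ α ≤ 1/2 := by
      intro α hα
      exact ⟨lt_of_le_of_lt hε hα.1, hα.2⟩
    have hg0 : ∀ α ∈ Set.Ioc ε (1/2 : ℝ), 0 ≤ stdGaussianQuantile (1 - α) := by
      intro α hα
      obtain ⟨h1, h2⟩ := hmem α hα
      exact sgQuantile_nonneg (by linarith) (by linarith)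
    have hganti : AntitoneOn (fun α => stdGaussianQuantile (1 - α)) (Set.Ioc ε (1/2 : ℝ)) := by
      intro a ha b hb hab
      obtain ⟨ha1, ha2⟩ := hmem a ha
      obtain ⟨hb1, hb2⟩ := hmem b hb
      exact sgQuantile_mono (by linarith) (by linarith) (by linarith)
    have meas_g : AEMeasurable (fun α => stdGaussianQuantile (1 - α))
        (volume.restrict (Set.Ioc ε (1/2 : ℝ))) :=
      aemeasurable_restrict_of_antitoneOn measurableSet_Ioc hganti
    -- region identity on the interval
    have hdH_eq : ∀ α ∈ Set.Ioc ε (1/2 : ℝ),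
        Metric.hausdorffDist (hdRegion d μ α) (hdRegion d ν α)
          = φ (stdGaussianQuantile (1 - α)) := by
      intro α hα
      obtain ⟨h1, h2⟩ := hmem α hα
      rw [region_eq hS₁ hμ hd h1 h2, region_eq hS₂ hν hd h1 h2]
      simp only [hφ, max_eq_left (hg0 α hα)]
    -- integrable dominator
    have hψint : IntegrableOn (fun α : ℝ => α ^ (-(1:ℝ)/2)) (Set.Ioc ε (1/2 : ℝ)) := by
      have h1 : IntervalIntegrable (fun x : ℝ => x ^ (-(1:ℝ)/2)) volume 0 (1/2) :=
        intervalIntegral.intervalIntegrable_rpow' (by norm_num)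
      have h2 := (intervalIntegrable_iff_integrableOn_Ioc_of_le (by norm_num : (0:ℝ) ≤ 1/2)).1 h1
      exact h2.mono_set (Set.Ioc_subset_Ioc_left hε)
    have hgψ : ∀ α ∈ Set.Ioc ε (1/2 : ℝ),
        stdGaussianQuantile (1 - α) ≤ 2 * α ^ (-(1:ℝ)/2) := by
      intro α hα
      obtain ⟨h1, h2⟩ := hmem α hα
      have h3 := sgQuantile_le h1 h2
      have h4 : α ^ (-(1:ℝ)/2) = (Real.sqrt α)⁻¹ := by
        rw [show (-(1:ℝ)/2) = -(1/2 : ℝ) by norm_num, Real.rpow_neg h1.le,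
          ← Real.sqrt_eq_rpow]
      rw [h4]
      rw [div_eq_mul_inv] at h3
      exact h3
    have int_g : IntegrableOn (fun α => stdGaussianQuantile (1 - α)) (Set.Ioc ε (1/2 : ℝ)) := by
      apply Integrable.mono' (hψint.const_mul 2) meas_g.aestronglyMeasurable
      rw [ae_restrict_iff' measurableSet_Ioc]
      apply ae_of_all
      intro α hα
      rw [Real.norm_eq_abs, abs_of_nonneg (hg0 α hα)]
      exact hgψ α hα
    have int_absg : IntegrableOn (fun α => |stdGaussianQuantile (1 - α)|)
        (Set.Ioc ε (1/2 : ℝ)) := int_g.abs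
    -- integrability of the Hausdorff distance integrand
    have hφb : ∀ α ∈ Set.Ioc ε (1/2 : ℝ),
        |φ (stdGaussianQuantile (1 - α)) - Δ| ≤ stdGaussianQuantile (1 - α) * Ssup := by
      intro α hα
      have h0 := hg0 α hα
      have := HF_bound (m₁ := m₁) (m₂ := m₂) (c := stdGaussianQuantile (1 - α)) hS₁ hS₂ h0
      simp only [hφ, max_eq_left h0]
      exact this
    have int_dom : IntegrableOn (fun α : ℝ => Δ + (2 * α ^ (-(1:ℝ)/2)) * Ssup)
        (Set.Ioc ε (1/2 : ℝ)) := by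
      apply Integrable.add
      · exact integrableOn_const (by rw [Real.volume_Ioc]; exact ENNReal.ofReal_ne_top)
      · exact (hψint.const_mul 2).mul_const Ssup
    have int_φg : IntegrableOn (fun α => φ (stdGaussianQuantile (1 - α)))
        (Set.Ioc ε (1/2 : ℝ)) := by
      apply Integrable.mono' int_dom
        (hφcont.measurable.comp_aemeasurable meas_g).aestronglyMeasurable
      rw [ae_restrict_iff' measurableSet_Ioc]
      apply ae_of_all
      intro α hα
      simp only [Function.comp_apply]
      rw [Real.norm_eq_abs, abs_of_nonneg (by exact Metric.hausdorffDist_nonneg)]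
      have h1 := hφb α hα
      have h2 := hgψ α hα
      have h3 := (abs_le.1 h1).2
      nlinarith [hSs0]
    have ae_eq : (fun α => Metric.hausdorffDist (hdRegion d μ α) (hdRegion d ν α))
        =ᵐ[volume.restrict (Set.Ioc ε (1/2 : ℝ))]
          (fun α => φ (stdGaussianQuantile (1 - α))) := by
      rw [Filter.EventuallyEq, ae_restrict_iff' measurableSet_Ioc]
      exact ae_of_all _ hdH_eq
    have int_f : IntegrableOn (fun α => Metric.hausdorffDist (hdRegion d μ α) (hdRegion d ν α))
        (Set.Ioc ε (1/2 : ℝ)) := int_φg.congr ae_eq.symm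
    -- constant integral
    have hvol : (volume (Set.Ioc ε (1/2 : ℝ))).toReal = 1/2 - ε := by
      rw [Real.volume_Ioc, ENNReal.toReal_ofReal (by linarith)]
    have int_const : IntegrableOn (fun _ : ℝ => Δ) (Set.Ioc ε (1/2 : ℝ)) :=
      integrableOn_const (by rw [Real.volume_Ioc]; exact ENNReal.ofReal_ne_top)
    have hconst : (∫ _α in Set.Ioc ε (1/2 : ℝ), Δ) = (1/2 - ε) * Δ := by
      rw [setIntegral_const, measureReal_def, hvol, smul_eq_mul]
    -- main integral bound
    have key : |(∫ α in Set.Ioc ε (1/2 : ℝ),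
          Metric.hausdorffDist (hdRegion d μ α) (hdRegion d ν α)) - (1/2 - ε) * Δ|
        ≤ (∫ α in Set.Ioc ε (1/2 : ℝ), |stdGaussianQuantile (1 - α)|) * Ssup := by
      rw [← hconst, ← integral_sub int_f int_const]
      have step1 : |∫ α in Set.Ioc ε (1/2 : ℝ),
          (Metric.hausdorffDist (hdRegion d μ α) (hdRegion d ν α) - Δ)|
          ≤ ∫ α in Set.Ioc ε (1/2 : ℝ),
            |Metric.hausdorffDist (hdRegion d μ α) (hdRegion d ν α) - Δ| := by
        have := norm_integral_le_integral_norm (μ := volume.restrict (Set.Ioc ε (1/2 : ℝ)))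
          (f := fun α => Metric.hausdorffDist (hdRegion d μ α) (hdRegion d ν α) - Δ)
        simpa [Real.norm_eq_abs] using this
      have step2 : ∫ α in Set.Ioc ε (1/2 : ℝ),
            |Metric.hausdorffDist (hdRegion d μ α) (hdRegion d ν α) - Δ|
          ≤ ∫ α in Set.Ioc ε (1/2 : ℝ), |stdGaussianQuantile (1 - α)| * Ssup := by
        apply setIntegral_mono_on (int_f.sub int_const).abs (int_absg.mul_const Ssup)
          measurableSet_Ioc
        intro α hα
        simp only [Pi.sub_apply]
        rw [hdH_eq α hα]
        calc |φ (stdGaussianQuantile (1 - α)) - Δ| ≤ stdGaussianQuantile (1 - α) * Ssup :=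
              hφb α hα
          _ ≤ |stdGaussianQuantile (1 - α)| * Ssup :=
              mul_le_mul_of_nonneg_right (le_abs_self _) hSs0
      have step3 : (∫ α in Set.Ioc ε (1/2 : ℝ), |stdGaussianQuantile (1 - α)| * Ssup)
          = (∫ α in Set.Ioc ε (1/2 : ℝ), |stdGaussianQuantile (1 - α)|) * Ssup :=
        integral_mul_const Ssup _
      calc |∫ α in Set.Ioc ε (1/2 : ℝ),
          (Metric.hausdorffDist (hdRegion d μ α) (hdRegion d ν α) - Δ)|
          ≤ ∫ α in Set.Ioc ε (1/2 : ℝ),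
            |Metric.hausdorffDist (hdRegion d μ α) (hdRegion d ν α) - Δ| := step1
        _ ≤ ∫ α in Set.Ioc ε (1/2 : ℝ), |stdGaussianQuantile (1 - α)| * Ssup := step2
        _ = (∫ α in Set.Ioc ε (1/2 : ℝ), |stdGaussianQuantile (1 - α)|) * Ssup := step3
    -- convert to interval integrals and finish
    rw [DR1eps, intervalIntegral.integral_of_le hεle, intervalIntegral.integral_of_le hεle]
    have hfactor : (1/2 - ε)⁻¹ * (∫ α in Set.Ioc ε (1/2 : ℝ),
        Metric.hausdorffDist (hdRegion d μ α) (hdRegion d ν α)) - Δ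
        = (1/2 - ε)⁻¹ * ((∫ α in Set.Ioc ε (1/2 : ℝ),
            Metric.hausdorffDist (hdRegion d μ α) (hdRegion d ν α)) - (1/2 - ε) * Δ) := by
      rw [mul_sub]
      have h2 : (1/2 - ε)⁻¹ * ((1/2 - ε) * Δ) = Δ := by
        rw [← mul_assoc, inv_mul_cancel₀ hhalf.ne', one_mul]
      rw [h2]
    rw [hfactor, abs_mul, abs_of_pos (inv_pos.2 hhalf)]
    calc (1/2 - ε)⁻¹ * |(∫ α in Set.Ioc ε (1/2 : ℝ),
          Metric.hausdorffDist (hdRegion d μ α) (hdRegion d ν α)) - (1/2 - ε) * Δ|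
        ≤ (1/2 - ε)⁻¹ * ((∫ α in Set.Ioc ε (1/2 : ℝ), |stdGaussianQuantile (1 - α)|) * Ssup) :=
          mul_le_mul_of_nonneg_left key (inv_pos.2 hhalf).le
      _ = ((1/2 - ε)⁻¹ * ∫ α in Set.Ioc ε (1/2 : ℝ), |stdGaussianQuantile (1 - α)|) * Ssup := by
          ring
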